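/- Let g(z) = (az+b)/(cz+d) with ad-bc = 1, and let x be holomorphic with x(g(z)) = x(z) and ẍ(z) ≠ 0. Define f(z) = z + 2ẋ(z)/ẍ(z). Then f(g(z)) = g(f(z)), i.e., f is covariant under g. -/

import Mathlib

/-- If x is holomorphic, invariant under g(z) = (az+b)/(cz+d)
(ad-bc = 1), with ẍ nonvanishing, then f(z) = z + 2ẋ(z)/ẍ(z) is covariant:
f(g(z)) = g(f(z)). -/
theorem stmt12 (a b c d : ℂ) (h : a*d - b*c = 1) (x : ℂ → ℂ)
    (hx : Differentiable ℂ x)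
    (hx'' : ∀ z : ℂ, deriv (deriv x) z ≠ 0)
    (hinv : ∀ z : ℂ, c*z + d ≠ 0 → x ((a*z+b)/(c*z+d)) = x z)
    (f : ℂ → ℂ) (hf : ∀ z : ℂ, f z = z + 2 * deriv x z / deriv (deriv x) z) :
    ∀ z : ℂ, c*z + d ≠ 0 →
      f ((a*z+b)/(c*z+d)) = (a * f z + b) / (c * f z + d) := by
  -- the open set where the Möbius map is defined
  have hU : IsOpen {w : ℂ | c*w+d ≠ 0} := by
    have : Continuous fun w : ℂ => c*w+d := by continuity
    exact isOpen_ne.preimage this |>.mono (by rfl) |>.mono (by rfl)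
  -- derivative of the Möbius map
  have hgd : ∀ w : ℂ, c*w+d ≠ 0 →
      HasDerivAt (fun w => (a*w+b)/(c*w+d)) (1/(c*w+d)^2) w := by
    intro w hw
    have h1 : HasDerivAt (fun w : ℂ => a*w+b) a w := by
      simpa using ((hasDerivAt_id w).const_mul a).add_const b
    have h2 : HasDerivAt (fun w : ℂ => c*w+d) c w := by
      simpa using ((hasDerivAt_id w).const_mul c).add_const d
    have hdiv := h1.div h2 hw
    refine hdiv.congr_deriv ?_
    have hnum : a*(c*w+d) - (a*w+b)*c = 1 := by linear_combination h
    rw [hnum]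
  -- the derivative of x is differentiable (holomorphic functions are analytic)
  have hd1 : Differentiable ℂ (deriv x) := fun w =>
    (((hx.differentiableOn.analyticOnNhd isOpen_univ).deriv w (Set.mem_univ w)).differentiableAt)
  -- first derivative relation
  have key1 : ∀ w : ℂ, c*w+d ≠ 0 →
      deriv x ((a*w+b)/(c*w+d)) = (c*w+d)^2 * deriv x w := by
    intro w hw
    have hEq : (fun z => x ((a*z+b)/(c*z+d))) =ᶠ[nhds w] x := by
      filter_upwards [hU.mem_nhds hw] with z hz using hinv z hz
    have hcomp : HasDerivAt (fun z => x ((a*z+b)/(c*z+d)))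
        (deriv x ((a*w+b)/(c*w+d)) * (1/(c*w+d)^2)) w :=
      ((hx ((a*w+b)/(c*w+d))).hasDerivAt).comp w (hgd w hw)
    have heq := hEq.deriv_eq
    rw [hcomp.deriv] at heq
    have ht2 : ((c*w+d)^2 : ℂ) ≠ 0 := pow_ne_zero _ hw
    rw [mul_one_div, div_eq_iff ht2] at heq
    linear_combination heq
  -- second derivative relation
  have key2 : ∀ w : ℂ, c*w+d ≠ 0 →
      deriv (deriv x) ((a*w+b)/(c*w+d))
        = 2*c*(c*w+d)^3 * deriv x w + (c*w+d)^4 * deriv (deriv x) w := by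
    intro w hw
    have hEq : (fun z => deriv x ((a*z+b)/(c*z+d)))
        =ᶠ[nhds w] (fun z => (c*z+d)^2 * deriv x z) := by
      filter_upwards [hU.mem_nhds hw] with z hz using key1 z hz
    have hcomp : HasDerivAt (fun z => deriv x ((a*z+b)/(c*z+d)))
        (deriv (deriv x) ((a*w+b)/(c*w+d)) * (1/(c*w+d)^2)) w :=
      by have := ((hd1 ((a*w+b)/(c*w+d))).hasDerivAt).comp w (hgd w hw); exact this
    have hlin : HasDerivAt (fun z : ℂ => c*z+d) c w := by
      simpa using ((hasDerivAt_id w).const_mul c).add_const d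
    have hpow : HasDerivAt (fun z : ℂ => (c*z+d)^2) (2*c*(c*w+d)) w := by
      have := hlin.pow 2
      refine this.congr_deriv ?_
      ring
    have hrhs : HasDerivAt (fun z => (c*z+d)^2 * deriv x z)
        ((2*c*(c*w+d)) * deriv x w + (c*w+d)^2 * deriv (deriv x) w) w :=
      hpow.mul ((hd1 w).hasDerivAt)
    have heq := hEq.deriv_eq
    rw [hcomp.deriv, hrhs.deriv] at heq
    have ht2 : ((c*w+d)^2 : ℂ) ≠ 0 := pow_ne_zero _ hw
    rw [mul_one_div, div_eq_iff ht2] at heq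
    linear_combination heq
  -- final algebra
  intro z hz
  set u := deriv x z with hu
  set v := deriv (deriv x) z with hv
  have hvne : v ≠ 0 := hx'' z
  have h1 : deriv x ((a*z+b)/(c*z+d)) = (c*z+d)^2 * u := key1 z hz
  have h2 : deriv (deriv x) ((a*z+b)/(c*z+d))
      = 2*c*(c*z+d)^3 * u + (c*z+d)^4 * v := key2 z hz
  have hsum : (c*z+d)*v + 2*c*u ≠ 0 := by
    intro hcontr
    apply hx'' ((a*z+b)/(c*z+d))
    rw [h2]
    have hfac : (2:ℂ)*c*(c*z+d)^3 * u + (c*z+d)^4 * v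
        = (c*z+d)^3 * ((c*z+d)*v + 2*c*u) := by ring
    rw [hfac, hcontr, mul_zero]
  have hbig : 2*c*(c*z+d)^3 * u + (c*z+d)^4 * v ≠ 0 := by
    have hfac : (2:ℂ)*c*(c*z+d)^3 * u + (c*z+d)^4 * v
        = (c*z+d)^3 * ((c*z+d)*v + 2*c*u) := by ring
    rw [hfac]
    exact mul_ne_zero (pow_ne_zero _ hz) hsum
  have hden' : c * (z + 2 * u / v) + d ≠ 0 := by
    have hrw : c * (z + 2 * u / v) + d = ((c*z+d)*v + 2*c*u)/v := by
      field_simp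
      ring
    rw [hrw]
    exact div_ne_zero hsum hvne
  have e1 : (a*z+b)/(c*z+d) + 2 * ((c*z+d)^2 * u) / (2*c*(c*z+d)^3 * u + (c*z+d)^4 * v)
      = ((a*z+b)*v + 2*a*u)/((c*z+d)*v + 2*c*u) := by
    rw [div_add_div _ _ hz hbig, div_eq_div_iff (mul_ne_zero hz hbig) hsum]
    linear_combination (-(2*u*(c*z+d)^3*((c*z+d)*v + 2*c*u))) * h
  have e2 : (a * (z + 2 * u / v) + b)/(c * (z + 2 * u / v) + d)
      = ((a*z+b)*v + 2*a*u)/((c*z+d)*v + 2*c*u) := by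
    rw [div_eq_div_iff hden' hsum]
    field_simp
    ring
  rw [hf, hf, h1, h2, e1, e2]
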